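/- Let (Ω, P) be a probability space, V a metric space with metric d, and let g : Ω → V, y : Ω → Fin C, and w : Fin C → V. Define ρ := ⨅ over pairs i ≠ j of d(w i, w j), and suppose ρ > 0. Let ε := E[d(g ω, w (y ω))]. Then P({ω : ∃ z ≠ y ω, d(g ω, w (y ω)) ≥ d(g ω, w z)}) ≤ 2ε/ρ. -/

import Mathlib

open MeasureTheory

theorem stmt1 {Ω : Type*} [MeasurableSpace Ω] (μ : Measure Ω) [IsProbabilityMeasure μ]
    {V : Type*} [MetricSpace V] {C : ℕ}
    (g : Ω → V) (y : Ω → Fin C) (w : Fin C → V)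
    (ρ : ℝ) (hρ : ρ = ⨅ p : {p : Fin C × Fin C // p.1 ≠ p.2}, dist (w p.1.1) (w p.1.2))
    (hρpos : 0 < ρ)
    (ε : ℝ) (hε : ε = ∫ ω, dist (g ω) (w (y ω)) ∂μ)
    (hint : Integrable (fun ω => dist (g ω) (w (y ω))) μ)
    (hmeas : MeasurableSet {ω | ∃ z, z ≠ y ω ∧ dist (g ω) (w (y ω)) ≥ dist (g ω) (w z)}) :
    (μ {ω | ∃ z, z ≠ y ω ∧ dist (g ω) (w (y ω)) ≥ dist (g ω) (w z)}).toReal ≤ 2 * ε / ρ := by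
  set f : Ω → ℝ := fun ω => dist (g ω) (w (y ω)) with hf
  have hsub : {ω | ∃ z, z ≠ y ω ∧ dist (g ω) (w (y ω)) ≥ dist (g ω) (w z)}
      ⊆ {ω | ρ / 2 ≤ f ω} := by
    rintro ω ⟨z, hz, hge⟩
    have hρle : ρ ≤ dist (w z) (w (y ω)) := by
      rw [hρ]
      have hbdd : BddBelow (Set.range fun p : {p : Fin C × Fin C // p.1 ≠ p.2} =>
          dist (w p.1.1) (w p.1.2)) :=
        ⟨0, Set.forall_mem_range.2 fun p => dist_nonneg⟩
      exact ciInf_le hbdd ⟨(z, y ω), hz⟩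
    have htri : dist (w z) (w (y ω)) ≤ dist (g ω) (w z) + dist (g ω) (w (y ω)) := by
      rw [dist_comm (g ω) (w z)]
      exact dist_triangle _ _ _
    simp only [Set.mem_setOf_eq, hf]
    linarith
  have hmono : (μ {ω | ∃ z, z ≠ y ω ∧ dist (g ω) (w (y ω)) ≥ dist (g ω) (w z)}).toReal
      ≤ (μ {ω | ρ / 2 ≤ f ω}).toReal :=
    ENNReal.toReal_mono (measure_ne_top μ _) (measure_mono hsub)
  have hmarkov := mul_meas_ge_le_integral_of_nonneg
    (Filter.Eventually.of_forall fun ω => dist_nonneg) hint (ρ / 2)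
  rw [← hε] at hmarkov
  have h2 : (μ {ω | ρ / 2 ≤ f ω}).toReal ≤ 2 * ε / ρ := by
    rw [le_div_iff₀ hρpos]
    have hmarkov' : ρ / 2 * (μ {ω | ρ / 2 ≤ f ω}).toReal ≤ ε := hmarkov
    nlinarith [hmarkov']
  linarith
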